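/- For all positive integers a and b, Φ(a, 2b) = exp(πi/4) · Φ(2b, −a). (This is the Landsberg–Schaar relation.) -/

import Mathlib

open Complex Finset Filter Topology Real

noncomputable section




/-- summability of Gaussian series with complex parameter of positive real part -/
lemma summable_gauss {A : ℂ} (hA : 0 < A.re) :
    Summable (fun n : ℤ => Complex.exp (-Real.pi * A * (n:ℂ)^2)) := by
  have h : Summable (fun n : ℤ => jacobiTheta₂_term n 0 (Complex.I * A)) := by
    rw [summable_jacobiTheta₂_term_iff]
    simpa using hA
  refine h.congr fun n => ?_
  unfold jacobiTheta₂_term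
  rw [mul_zero]
  congr 1
  ring_nf
  rw [Complex.I_sq]
  ring

/-- splitting a sum over ℤ into residue classes -/
lemma tsum_int_split (q : ℕ) (hq : 0 < q) {f : ℤ → ℂ} (hf : Summable f) :
    ∑' n : ℤ, f n = ∑ r ∈ Finset.range q, ∑' m : ℤ, f (m * q + r) := by
  haveI : NeZero q := ⟨hq.ne'⟩
  set e := (Int.divModEquiv q).symm with hE
  have he : ∀ p : ℤ × Fin q, e p = p.1 * q + (p.2 : ℤ) := fun p => by
    simp [hE, Int.divModEquiv]
  have hq' : (q : ℤ) ≠ 0 := by exact_mod_cast hq.ne'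
  have hinj : ∀ r : ℤ, Function.Injective (fun m : ℤ => m * q + r) := by
    intro r m m' h
    simp only at h
    have := mul_right_cancel₀ hq' (by linarith : m * q = m' * q)
    exact this
  have hsum : Summable (fun p : ℤ × Fin q => f (p.1 * q + (p.2 : ℤ))) := by
    have := (e.summable_iff (f := f)).mpr hf
    exact this.congr fun p => by rw [Function.comp_apply, he]
  calc ∑' n : ℤ, f n = ∑' p : ℤ × Fin q, f (p.1 * q + (p.2 : ℤ)) := by
        rw [← e.tsum_eq f]; exact tsum_congr fun p => by rw [he]
    _ = ∑' m : ℤ, ∑' r : Fin q, f (m * q + (r : ℤ)) :=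
        Summable.tsum_prod' hsum fun m => .of_finite
    _ = ∑' m : ℤ, ∑ r : Fin q, f (m * q + (r : ℤ)) := tsum_congr fun m => tsum_fintype _
    _ = ∑ r : Fin q, ∑' m : ℤ, f (m * q + (r : ℤ)) := by
        refine Summable.tsum_finsetSum fun r _ => hf.comp_injective (hinj (r : ℤ))
    _ = ∑ r ∈ Finset.range q, ∑' m : ℤ, f (m * q + r) := by
        rw [← Fin.sum_univ_eq_sum_range (fun r : ℕ => ∑' m : ℤ, f (m * q + (r:ℤ))) q]

/-- Poisson summation for a shifted Gaussian -/
lemma poisson_shift {c : ℂ} (hc : 0 < c.re) (x : ℝ) :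
    ∑' m : ℤ, Complex.exp (-Real.pi * c * ((m:ℂ) + x)^2) =
      (c⁻¹) ^ (1/2 : ℂ) *
        ∑' k : ℤ, Complex.exp (-Real.pi * c⁻¹ * (k:ℂ)^2 - 2*Real.pi*Complex.I*x*k) := by
  have hc0 : c ≠ 0 := fun h => by simp [h] at hc
  have h1 : 0 < (c⁻¹).re := by
    rw [Complex.inv_re]
    exact div_pos hc (Complex.normSq_pos.mpr hc0)
  have hcp : (c⁻¹ : ℂ) ^ (1/2 : ℂ) ≠ 0 := by
    rw [Ne, Complex.cpow_eq_zero_iff]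
    simp [hc0]
  have key := Complex.tsum_exp_neg_quadratic h1 (-Complex.I * x)
  have e1 : ∀ n : ℤ, -(Real.pi:ℂ) * c⁻¹ * n ^ 2 + 2 * Real.pi * (-Complex.I * x) * n
      = -Real.pi * c⁻¹ * n^2 - 2*Real.pi*Complex.I*x*n := fun n => by ring
  have e2 : ∀ n : ℤ, -(Real.pi:ℂ) / c⁻¹ * ((n:ℂ) + Complex.I * (-Complex.I * x)) ^ 2
      = -Real.pi * c * ((n:ℂ) + x)^2 := fun n => by
    rw [div_eq_mul_inv, inv_inv]
    have : Complex.I * (-Complex.I * (x:ℂ)) = x := by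
      rw [← mul_assoc, mul_neg, Complex.I_mul_I]; ring
    rw [this]
  simp_rw [e1, e2] at key
  rw [key, ← mul_assoc, mul_one_div, div_self hcp, one_mul]

lemma summable_bound : Summable (fun k : ℤ => Real.exp (-Real.pi * (k:ℝ)^2)) := by
  have h : Summable (fun n : ℤ => jacobiTheta₂_term n 0 Complex.I) := by
    rw [summable_jacobiTheta₂_term_iff]; simp
  have := (summable_norm_iff.mpr h)
  refine this.congr fun k => ?_
  unfold jacobiTheta₂_term
  rw [mul_zero, zero_add, Complex.norm_exp]
  congr 1
  have : (Real.pi:ℂ) * Complex.I * (k:ℂ)^2 * Complex.I = ((-Real.pi * (k:ℝ)^2 : ℝ) : ℂ) := by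
    push_cast; ring_nf; rw [Complex.I_sq]; ring
  rw [this, Complex.ofReal_re]

lemma re_exponent (x : ℝ) (k : ℤ) (z : ℂ) :
    (-(Real.pi:ℂ) * z * (k:ℂ)^2 - 2*Real.pi*Complex.I*(x:ℂ)*(k:ℂ)).re
      = -Real.pi * (k:ℝ)^2 * z.re := by
  have h : -(Real.pi:ℂ) * z * (k:ℂ)^2 - 2*Real.pi*Complex.I*(x:ℂ)*(k:ℂ)
      = ((-Real.pi * (k:ℝ)^2 : ℝ) : ℂ) * z + ((-(2*Real.pi*x*k) : ℝ) : ℂ) * Complex.I := by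
    push_cast; ring
  rw [h, Complex.add_re, Complex.re_ofReal_mul, Complex.re_ofReal_mul, Complex.I_re]
  ring

/-- the limit of the theta-type series as the real part of the parameter goes to infinity -/
lemma tendsto_G {ι : Type} {l : Filter ι} (x : ℝ) {z : ι → ℂ}
    (hz : Tendsto (fun i => (z i).re) l atTop) :
    Tendsto (fun i => ∑' k : ℤ, Complex.exp
        (-Real.pi * z i * (k:ℂ)^2 - 2*Real.pi*Complex.I*(x:ℂ)*(k:ℂ))) l (𝓝 1) := by
  have key := tendsto_tsum_of_dominated_convergence
    (f := fun i (k : ℤ) => Complex.exp (-Real.pi * z i * (k:ℂ)^2 - 2*Real.pi*Complex.I*(x:ℂ)*(k:ℂ)))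
    (g := fun k : ℤ => if k = 0 then 1 else 0)
    (bound := fun k : ℤ => Real.exp (-Real.pi * (k:ℝ)^2)) (𝓕 := l)
    summable_bound ?_ ?_
  · have : ∑' k : ℤ, (if k = 0 then (1:ℂ) else 0) = 1 := tsum_ite_eq 0 1
    rwa [this] at key
  · intro k
    by_cases hk : k = 0
    · subst hk
      simpa using tendsto_const_nhds (x := (1:ℂ)) (f := l)
    · simp only [hk, if_false]
      rw [tendsto_zero_iff_norm_tendsto_zero]
      simp only [Complex.norm_exp, re_exponent]
      have hk2 : -Real.pi * (k:ℝ)^2 < 0 := by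
        have hk' : (k:ℝ) ≠ 0 := Int.cast_ne_zero.mpr hk
        have : (0:ℝ) < (k:ℝ)^2 := by positivity
        nlinarith [Real.pi_pos]
      have h2 : Tendsto (fun i => -Real.pi * (k:ℝ)^2 * (z i).re) l atBot :=
        (tendsto_const_mul_atBot_of_neg hk2).mpr hz
      exact Real.tendsto_exp_atBot.comp h2
  · filter_upwards [hz.eventually_ge_atTop 1] with i hi k
    rw [Complex.norm_exp, re_exponent]
    apply Real.exp_le_exp.mpr
    nlinarith [mul_nonneg (mul_nonneg Real.pi_pos.le (sq_nonneg (k:ℝ))) (sub_nonneg.mpr hi)]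

lemma cpow_half_ofReal {t : ℝ} (ht : 0 ≤ t) :
    ((t:ℂ)) ^ (1/2 : ℂ) = ((Real.sqrt t : ℝ) : ℂ) := by
  rw [show (1/2 : ℂ) = ((1/2 : ℝ) : ℂ) by norm_num, ← Complex.ofReal_cpow ht,
    ← Real.sqrt_eq_rpow]

lemma ofReal_mul_cpow_half {t : ℝ} (ht : 0 < t) {z : ℂ} (hz : z ≠ 0) :
    ((t:ℂ) * z) ^ (1/2 : ℂ) = ((Real.sqrt t : ℝ) : ℂ) * z ^ (1/2 : ℂ) := by
  have h0 : (t:ℂ) * z ≠ 0 := mul_ne_zero (by exact_mod_cast ht.ne') hz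
  rw [Complex.cpow_def_of_ne_zero h0, Complex.cpow_def_of_ne_zero hz,
    Complex.log_ofReal_mul ht hz, add_mul, Complex.exp_add]
  congr 1
  rw [show (Real.log t : ℂ) * (1/2) = ((Real.log t / 2 : ℝ) : ℂ) by push_cast; ring,
    ← Complex.ofReal_exp]
  norm_cast
  rw [Real.sqrt_eq_rpow, Real.rpow_def_of_pos ht]
  ring_nf

lemma I_cpow_half : (Complex.I) ^ (1/2 : ℂ) = Complex.exp (Real.pi * Complex.I / 4) := by
  rw [Complex.cpow_def_of_ne_zero Complex.I_ne_zero, Complex.log_I]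
  congr 1
  ring
lemma repA (a b : ℤ) (ha : 0 < a) (hb : 0 < b) {ε : ℝ} (hε : 0 < ε) :
    ((Real.sqrt ε : ℝ) : ℂ) * ∑' n : ℤ, Complex.exp (-(Real.pi:ℂ) *
        ((ε:ℂ) - 2*(b:ℂ)*Complex.I/(a:ℂ)) * (n:ℂ)^2)
      = ∑ r ∈ Finset.range a.toNat,
          Complex.exp ((Real.pi:ℂ)*Complex.I*(r:ℂ)^2*(2*(b:ℂ))/(a:ℂ)) * (((a:ℝ)⁻¹ : ℝ):ℂ) *
          ∑' k : ℤ, Complex.exp (-(Real.pi:ℂ) * (((ε*(a:ℝ)^2)⁻¹ : ℝ):ℂ) * (k:ℂ)^2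
            - 2*(Real.pi:ℂ)*Complex.I*(((r:ℝ)/(a:ℝ) : ℝ):ℂ)*(k:ℂ)) := by
  have haR : (0:ℝ) < (a:ℝ) := by exact_mod_cast ha
  have haC : (a:ℂ) ≠ 0 := by exact_mod_cast ha.ne'
  set A : ℂ := (ε:ℂ) - 2*(b:ℂ)*Complex.I/(a:ℂ) with hA
  have hAre : A.re = ε := by
    simp [hA, Complex.sub_re, Complex.div_re, Complex.ofReal_re]
  have hre : 0 < A.re := by rw [hAre]; exact hε
  have hN : ((a.toNat : ℤ)) = a := Int.toNat_of_nonneg ha.le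
  have hNpos : 0 < a.toNat := by omega
  -- split the sum
  rw [tsum_int_split a.toNat hNpos (summable_gauss hre)]
  rw [Finset.mul_sum]
  refine Finset.sum_congr rfl fun r _ => ?_
  -- rewrite each term of inner sum
  have hterm : ∀ m : ℤ, Complex.exp (-(Real.pi:ℂ) * A * ((m * (a.toNat:ℤ) + (r:ℤ) : ℤ):ℂ)^2)
      = Complex.exp ((Real.pi:ℂ)*Complex.I*(r:ℂ)^2*(2*(b:ℂ))/(a:ℂ)) *
        Complex.exp (-(Real.pi:ℂ) * ((ε*(a:ℝ)^2 : ℝ):ℂ) * ((m:ℂ) + (((r:ℝ)/(a:ℝ) : ℝ):ℂ))^2) := by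
    intro m
    rw [← Complex.exp_add]
    rw [show -(Real.pi:ℂ) * A * ((m * (a.toNat:ℤ) + (r:ℤ) : ℤ):ℂ)^2
        = ((Real.pi:ℂ)*Complex.I*(r:ℂ)^2*(2*(b:ℂ))/(a:ℂ)
            + -(Real.pi:ℂ) * ((ε*(a:ℝ)^2 : ℝ):ℂ) * ((m:ℂ) + (((r:ℝ)/(a:ℝ) : ℝ):ℂ))^2)
          + ((b * (a*m^2 + 2*m*(r:ℤ)) : ℤ):ℂ) * (2*(Real.pi:ℂ)*Complex.I) from ?_]
    · rw [Complex.exp_add]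
      rw [show ((b * (a*m^2 + 2*m*(r:ℤ)) : ℤ):ℂ) * (2*(Real.pi:ℂ)*Complex.I)
          = ((b * (a*m^2 + 2*m*(r:ℤ)) : ℤ):ℂ) * (2*(Real.pi:ℝ)*Complex.I) from by push_cast; ring]
      rw [Complex.exp_int_mul_two_pi_mul_I, mul_one]
    · rw [hA]
      push_cast [hN]
      field_simp
      ring
  have h1 : (∑' m : ℤ, Complex.exp (-(Real.pi:ℂ) * A * ((m * (a.toNat:ℤ) + (r:ℤ) : ℤ):ℂ)^2))
      = Complex.exp ((Real.pi:ℂ)*Complex.I*(r:ℂ)^2*(2*(b:ℂ))/(a:ℂ)) *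
        ∑' m : ℤ, Complex.exp (-(Real.pi:ℂ) * ((ε*(a:ℝ)^2 : ℝ):ℂ) *
          ((m:ℂ) + (((r:ℝ)/(a:ℝ) : ℝ):ℂ))^2) := by
    rw [← tsum_mul_left]
    exact tsum_congr fun m => hterm m
  have hc : (0:ℝ) < ((ε*(a:ℝ)^2 : ℝ):ℂ).re := by
    rw [Complex.ofReal_re]; positivity
  rw [h1, poisson_shift hc ((r:ℝ)/(a:ℝ))]
  have hinv : ((ε*(a:ℝ)^2 : ℝ):ℂ)⁻¹ = (((ε*(a:ℝ)^2)⁻¹ : ℝ):ℂ) := by norm_cast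
  rw [hinv, cpow_half_ofReal (by positivity)]
  have hsR : Real.sqrt ε * Real.sqrt ((ε*(a:ℝ)^2)⁻¹) = (a:ℝ)⁻¹ := by
    rw [← Real.sqrt_mul hε.le]
    rw [show ε * (ε*(a:ℝ)^2)⁻¹ = ((a:ℝ)^2)⁻¹ from by field_simp]
    rw [Real.sqrt_inv, Real.sqrt_sq haR.le]
  have hs : ((Real.sqrt ε : ℝ):ℂ) * ((Real.sqrt ((ε*(a:ℝ)^2)⁻¹) : ℝ):ℂ) = (((a:ℝ)⁻¹ : ℝ):ℂ) := by
    rw [← Complex.ofReal_mul, hsR]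
  set S := ∑' k : ℤ, Complex.exp (-(Real.pi:ℂ) * (((ε*(a:ℝ)^2)⁻¹ : ℝ):ℂ) * (k:ℂ)^2
            - 2*(Real.pi:ℂ)*Complex.I*(((r:ℝ)/(a:ℝ) : ℝ):ℂ)*(k:ℂ)) with hSdef
  linear_combination (Complex.exp ((Real.pi:ℂ)*Complex.I*(r:ℂ)^2*(2*(b:ℂ))/(a:ℂ)) * S) * hs
lemma repB (a b : ℤ) (ha : 0 < a) (hb : 0 < b) {ε : ℝ} (hε : 0 < ε) :
    ((Real.sqrt ε : ℝ) : ℂ) * ∑' n : ℤ, Complex.exp (-(Real.pi:ℂ) *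
        ((ε:ℂ) - 2*(b:ℂ)*Complex.I/(a:ℂ)) * (n:ℂ)^2)
      = ∑ s ∈ Finset.range (2*b).toNat,
          Complex.exp ((Real.pi:ℂ)*Complex.I*(s:ℂ)^2*(-(a:ℂ))/(2*(b:ℂ))) *
          (((Real.sqrt ε : ℝ):ℂ) *
            ((((ε*(a:ℝ)^2)⁻¹ : ℝ):ℂ) + (((2*(a:ℝ)*(b:ℝ))⁻¹ : ℝ):ℂ)*Complex.I) ^ (1/2 : ℂ) *
            (((ε:ℂ) - 2*(b:ℂ)*Complex.I/(a:ℂ))⁻¹) ^ (1/2 : ℂ)) *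
          ∑' k : ℤ, Complex.exp (-(Real.pi:ℂ) *
              ((((ε*(a:ℝ)^2)⁻¹ : ℝ):ℂ) + (((2*(a:ℝ)*(b:ℝ))⁻¹ : ℝ):ℂ)*Complex.I) * (k:ℂ)^2
            - 2*(Real.pi:ℂ)*Complex.I*(((s:ℝ)/(2*(b:ℝ)) : ℝ):ℂ)*(k:ℂ)) := by
  have haR : (0:ℝ) < (a:ℝ) := by exact_mod_cast ha
  have hbR : (0:ℝ) < (b:ℝ) := by exact_mod_cast hb
  have haC : (a:ℂ) ≠ 0 := by exact_mod_cast ha.ne'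
  have hbC : (b:ℂ) ≠ 0 := by exact_mod_cast hb.ne'
  have hεC : (ε:ℂ) ≠ 0 := by exact_mod_cast hε.ne'
  set A : ℂ := (ε:ℂ) - 2*(b:ℂ)*Complex.I/(a:ℂ) with hA
  set Z : ℂ := (((ε*(a:ℝ)^2)⁻¹ : ℝ):ℂ) + (((2*(a:ℝ)*(b:ℝ))⁻¹ : ℝ):ℂ)*Complex.I with hZ
  clear_value A Z
  have hAre : A.re = ε := by
    simp [hA, Complex.sub_re, Complex.div_re, Complex.ofReal_re]
  have hre : 0 < A.re := by rw [hAre]; exact hε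
  have hA0 : A ≠ 0 := fun h => by rw [h] at hre; simp at hre
  have hZre : Z.re = (ε*(a:ℝ)^2)⁻¹ := by
    rw [hZ, Complex.add_re, Complex.ofReal_re, Complex.re_ofReal_mul, Complex.I_re,
      mul_zero, add_zero]
  have hZrepos : 0 < Z.re := by rw [hZre]; positivity
  have hZ0 : Z ≠ 0 := fun h => by rw [h] at hZrepos; simp at hZrepos
  have hZinvre : 0 < (Z⁻¹).re := by
    rw [Complex.inv_re]
    exact div_pos hZrepos (Complex.normSq_pos.mpr hZ0)
  have hAinvre : 0 < (A⁻¹).re := by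
    rw [Complex.inv_re]
    exact div_pos hre (Complex.normSq_pos.mpr hA0)
  -- the key algebraic identities
  have hc0 : (-2*(ε:ℂ)*(a:ℂ)*(b:ℂ)*Complex.I) ≠ 0 := by
    simp [hεC, haC, hbC, Complex.I_ne_zero]
  have hkey2 : Z * (-2*(ε:ℂ)*(a:ℂ)*(b:ℂ)*Complex.I) = A := by
    rw [hZ, hA]
    push_cast
    field_simp
    ring_nf
    rw [Complex.I_sq]
    ring
  have hZinv : Z⁻¹ = -2*(ε:ℂ)*(a:ℂ)*(b:ℂ)*Complex.I * A⁻¹ := by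
    refine inv_eq_of_mul_eq_one_left ?_
    rw [← hkey2, mul_inv]
    field_simp [hZ0]
  have hA0' : (ε:ℂ) - 2*(b:ℂ)*Complex.I/(a:ℂ) ≠ 0 := by rw [← hA]; exact hA0
  have hIA : (a:ℂ)*Complex.I*A = (ε:ℂ)*(a:ℂ)*Complex.I + 2*(b:ℂ) := by
    rw [hA]
    field_simp
    ring_nf
    rw [Complex.I_sq]
    ring
  have hAA : A * A⁻¹ = 1 := mul_inv_cancel₀ hA0
  have h4 : A * ((-2*(ε:ℂ)*(a:ℂ)*(b:ℂ)*Complex.I*A⁻¹)/(4*(b:ℂ)^2)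
      + (a:ℂ)*Complex.I/(2*(b:ℂ))) = 1 := by
    rw [mul_add, show A * ((-2*(ε:ℂ)*(a:ℂ)*(b:ℂ)*Complex.I*A⁻¹)/(4*(b:ℂ)^2))
        = (-2*(ε:ℂ)*(a:ℂ)*(b:ℂ)*Complex.I*(A*A⁻¹))/(4*(b:ℂ)^2) by ring, hAA,
      show A * ((a:ℂ)*Complex.I/(2*(b:ℂ))) = ((a:ℂ)*Complex.I*A)/(2*(b:ℂ)) by ring, hIA,
      div_add_div _ _ (by simp [hbC]) (by simp [hbC]), div_eq_one_iff_eq (by simp [hbC])]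
    ring
  have hAinv : A⁻¹ = Z⁻¹/(4*(b:ℂ)^2) + (a:ℂ)*Complex.I/(2*(b:ℂ)) := by
    rw [hZinv]
    exact inv_eq_of_mul_eq_one_right h4
  have hM : (((2*b).toNat : ℤ)) = 2*b := Int.toNat_of_nonneg (by omega)
  have hMpos : 0 < (2*b).toNat := by omega
  -- step 0 : Poisson summation on the full sum
  have step0 : ∑' n : ℤ, Complex.exp (-(Real.pi:ℂ) * A * (n:ℂ)^2)
      = (A⁻¹) ^ (1/2:ℂ) * ∑' k : ℤ, Complex.exp (-(Real.pi:ℂ) * A⁻¹ * (k:ℂ)^2) := by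
    have h := poisson_shift (c := A) hre 0
    rw [show (∑' m : ℤ, Complex.exp (-(Real.pi:ℂ) * A * ((m:ℂ) + ((0:ℝ):ℂ))^2))
        = ∑' n : ℤ, Complex.exp (-(Real.pi:ℂ) * A * (n:ℂ)^2) from tsum_congr fun m => by
          norm_num] at h
    rw [show (∑' k : ℤ, Complex.exp (-(Real.pi:ℂ) * A⁻¹ * (k:ℂ)^2
          - 2*(Real.pi:ℂ)*Complex.I*((0:ℝ):ℂ)*(k:ℂ)))
        = ∑' k : ℤ, Complex.exp (-(Real.pi:ℂ) * A⁻¹ * (k:ℂ)^2) from tsum_congr fun k => by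
          norm_num] at h
    exact h
  rw [step0, tsum_int_split (2*b).toNat hMpos (summable_gauss hAinvre)]
  rw [Finset.mul_sum, Finset.mul_sum]
  refine Finset.sum_congr rfl fun s _ => ?_
  -- per-term rewrite of the inner sum
  have key : ∀ (w : ℂ) (m : ℤ), -(Real.pi:ℂ) * (w/(4*(b:ℂ)^2) + (a:ℂ)*Complex.I/(2*(b:ℂ)))
        * ((m * (2*b) + (s:ℤ) : ℤ):ℂ)^2
      = ((Real.pi:ℂ)*Complex.I*(s:ℂ)^2*(-(a:ℂ))/(2*(b:ℂ))
          + -(Real.pi:ℂ) * w * ((m:ℂ) + (((s:ℝ)/(2*(b:ℝ)) : ℝ):ℂ))^2)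
        + ((-(a * (b*m^2 + m*(s:ℤ))) : ℤ):ℂ) * (2*(Real.pi:ℂ)*Complex.I) := by
    intro w m
    push_cast
    field_simp
    ring
  have hterm : ∀ m : ℤ, Complex.exp (-(Real.pi:ℂ) * A⁻¹ * ((m * ((2*b).toNat:ℤ) + (s:ℤ) : ℤ):ℂ)^2)
      = Complex.exp ((Real.pi:ℂ)*Complex.I*(s:ℂ)^2*(-(a:ℂ))/(2*(b:ℂ))) *
        Complex.exp (-(Real.pi:ℂ) * Z⁻¹ * ((m:ℂ) + (((s:ℝ)/(2*(b:ℝ)) : ℝ):ℂ))^2) := by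
    intro m
    rw [← Complex.exp_add, hM, hAinv, key Z⁻¹ m, Complex.exp_add]
    rw [show ((-(a * (b*m^2 + m*(s:ℤ))) : ℤ):ℂ) * (2*(Real.pi:ℂ)*Complex.I)
        = ((-(a * (b*m^2 + m*(s:ℤ))) : ℤ):ℂ) * (2*(Real.pi:ℝ)*Complex.I) from by push_cast; ring]
    rw [Complex.exp_int_mul_two_pi_mul_I, mul_one]
  have h1 : (∑' m : ℤ, Complex.exp (-(Real.pi:ℂ) * A⁻¹ *
        ((m * ((2*b).toNat:ℤ) + (s:ℤ) : ℤ):ℂ)^2))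
      = Complex.exp ((Real.pi:ℂ)*Complex.I*(s:ℂ)^2*(-(a:ℂ))/(2*(b:ℂ))) *
        ∑' m : ℤ, Complex.exp (-(Real.pi:ℂ) * Z⁻¹ * ((m:ℂ) + (((s:ℝ)/(2*(b:ℝ)) : ℝ):ℂ))^2) := by
    rw [← tsum_mul_left]
    exact tsum_congr fun m => hterm m
  rw [h1, poisson_shift hZinvre ((s:ℝ)/(2*(b:ℝ))), inv_inv]
  ring
/-- Normalized quadratic Gauss sum `Φ(a, b) = (1/√a) · Σ_{n=0}^{a−1} exp(πi n² b / a)`. -/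
noncomputable def Phi (a b : ℤ) : ℂ :=
  ((Real.sqrt (a : ℝ) : ℝ) : ℂ)⁻¹ *
    ∑ n ∈ Finset.range a.toNat,
      Complex.exp (Real.pi * Complex.I * (n : ℂ) ^ 2 * (b : ℂ) / (a : ℂ))
set_option maxHeartbeats 1000000 in
/-- The Landsberg–Schaar relation: for positive integers `a`, `b`,
`Φ(a, 2b) = exp(πi/4) · Φ(2b, −a)`. -/
theorem landsberg_schaar (a b : ℤ) (ha : 0 < a) (hb : 0 < b) :
    Phi a (2 * b) = Complex.exp (Real.pi * Complex.I / 4) * Phi (2 * b) (-a) := by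
  have haR : (0:ℝ) < (a:ℝ) := by exact_mod_cast ha
  have hbR : (0:ℝ) < (b:ℝ) := by exact_mod_cast hb
  have haC : (a:ℂ) ≠ 0 := by exact_mod_cast ha.ne'
  have hbC : (b:ℂ) ≠ 0 := by exact_mod_cast hb.ne'
  set l : Filter ℝ := 𝓝[>] (0:ℝ) with hl
  set Z : ℝ → ℂ := fun ε => (((ε*(a:ℝ)^2)⁻¹ : ℝ):ℂ) + (((2*(a:ℝ)*(b:ℝ))⁻¹ : ℝ):ℂ)*Complex.I
    with hZdef
  set A : ℝ → ℂ := fun ε => (ε:ℂ) - 2*(b:ℂ)*Complex.I/(a:ℂ) with hAdef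
  have hZre : ∀ ε : ℝ, (Z ε).re = (ε*(a:ℝ)^2)⁻¹ := fun ε => by
    rw [hZdef]
    rw [Complex.add_re, Complex.ofReal_re, Complex.re_ofReal_mul, Complex.I_re,
      mul_zero, add_zero]
  have hZ0 : ∀ {ε : ℝ}, 0 < ε → Z ε ≠ 0 := by
    intro ε hε h
    have h2 := hZre ε
    rw [h] at h2
    simp only [Complex.zero_re] at h2
    have : (0:ℝ) < (ε*(a:ℝ)^2)⁻¹ := by positivity
    rw [← h2] at this
    exact lt_irrefl _ this
  -- base tendsto fact
  have hz0 : Tendsto (fun ε : ℝ => (ε*(a:ℝ)^2)⁻¹) l atTop := by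
    have h1 : Tendsto (fun ε : ℝ => ε*(a:ℝ)^2) l (𝓝[>] 0) := by
      rw [tendsto_nhdsWithin_iff]
      constructor
      · have h2 : Tendsto (fun ε : ℝ => ε*(a:ℝ)^2) (𝓝 0) (𝓝 (0*(a:ℝ)^2)) :=
          (continuous_mul_right ((a:ℝ)^2)).tendsto 0
        rw [zero_mul] at h2
        exact h2.mono_left nhdsWithin_le_nhds
      · filter_upwards [self_mem_nhdsWithin] with ε hε
        have hε' : (0:ℝ) < ε := hε
        exact Set.mem_Ioi.mpr (by positivity)
    exact tendsto_inv_nhdsGT_zero.comp h1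
  have hz1 : Tendsto (fun ε : ℝ => ((((ε*(a:ℝ)^2)⁻¹ : ℝ):ℂ)).re) l atTop := by
    simpa only [Complex.ofReal_re] using hz0
  have hz2 : Tendsto (fun ε : ℝ => (Z ε).re) l atTop := by
    refine Tendsto.congr (fun ε => (hZre ε).symm) hz0
  -- Claim A : limit of F along l
  have hFA : Tendsto (fun ε : ℝ => ((Real.sqrt ε : ℝ):ℂ) * ∑' n : ℤ,
        Complex.exp (-(Real.pi:ℂ) * (A ε) * (n:ℂ)^2)) l
      (𝓝 ((∑ r ∈ Finset.range a.toNat,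
        Complex.exp ((Real.pi:ℂ)*Complex.I*(r:ℂ)^2*(2*(b:ℂ))/(a:ℂ))) * (((a:ℝ)⁻¹ : ℝ):ℂ))) := by
    have hlim : Tendsto (fun ε : ℝ => ∑ r ∈ Finset.range a.toNat,
          Complex.exp ((Real.pi:ℂ)*Complex.I*(r:ℂ)^2*(2*(b:ℂ))/(a:ℂ)) * (((a:ℝ)⁻¹ : ℝ):ℂ) *
          ∑' k : ℤ, Complex.exp (-(Real.pi:ℂ) * (((ε*(a:ℝ)^2)⁻¹ : ℝ):ℂ) * (k:ℂ)^2
            - 2*(Real.pi:ℂ)*Complex.I*(((r:ℝ)/(a:ℝ) : ℝ):ℂ)*(k:ℂ))) l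
        (𝓝 (∑ r ∈ Finset.range a.toNat,
          Complex.exp ((Real.pi:ℂ)*Complex.I*(r:ℂ)^2*(2*(b:ℂ))/(a:ℂ)) * (((a:ℝ)⁻¹ : ℝ):ℂ) * 1)) := by
      refine tendsto_finset_sum _ fun r _ => ?_
      exact (tendsto_G ((r:ℝ)/(a:ℝ)) hz1).const_mul _
    simp only [mul_one] at hlim
    rw [← Finset.sum_mul] at hlim
    refine Tendsto.congr' ?_ hlim
    filter_upwards [self_mem_nhdsWithin] with ε hε
    exact (repA a b ha hb hε).symm
  -- Claim B : pieces
  have hsqa2 : Real.sqrt (((a:ℝ)^2)⁻¹) = (a:ℝ)⁻¹ := by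
    rw [Real.sqrt_inv, Real.sqrt_sq haR.le]
  -- limit of ((ε : ℂ) * Z ε) ^ (1/2)
  have hW_tend : Tendsto (fun ε : ℝ => (((((a:ℝ)^2)⁻¹:ℝ):ℂ) + ((ε*(2*(a:ℝ)*(b:ℝ))⁻¹ : ℝ):ℂ)*Complex.I))
      l (𝓝 ((((a:ℝ)^2)⁻¹:ℝ):ℂ)) := by
    have hc : Continuous (fun ε : ℝ => (((((a:ℝ)^2)⁻¹:ℝ):ℂ) +
        ((ε*(2*(a:ℝ)*(b:ℝ))⁻¹ : ℝ):ℂ)*Complex.I)) := by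
      continuity
    have h2 := (hc.tendsto 0).mono_left (nhdsWithin_le_nhds (s := Set.Ioi (0:ℝ)))
    simpa using h2
  have hWeval : ∀ᶠ ε in l, (((((a:ℝ)^2)⁻¹:ℝ):ℂ) + ((ε*(2*(a:ℝ)*(b:ℝ))⁻¹ : ℝ):ℂ)*Complex.I)
      = (ε:ℂ) * Z ε := by
    filter_upwards [self_mem_nhdsWithin] with ε hε
    have hε' : (0:ℝ) < ε := hε
    have hεC : (ε:ℂ) ≠ 0 := by exact_mod_cast hε'.ne'
    rw [hZdef]
    push_cast
    field_simp
  have hcpow1 : Tendsto (fun ε : ℝ => ((ε:ℂ) * Z ε) ^ (1/2:ℂ)) l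
      (𝓝 ((((a:ℝ)⁻¹:ℝ)):ℂ)) := by
    have hslit : ((((a:ℝ)^2)⁻¹:ℝ):ℂ) ∈ Complex.slitPlane := by
      rw [Complex.mem_slitPlane_iff]
      left
      rw [Complex.ofReal_re]
      positivity
    have hc := (continuousAt_cpow_const (b := (1/2:ℂ)) hslit).tendsto
    have h3 := hc.comp (Tendsto.congr' hWeval hW_tend)
    rw [cpow_half_ofReal (by positivity), hsqa2] at h3
    exact h3
  -- limit of ((A ε)⁻¹) ^ (1/2)
  have hA0ne : (-(2*(b:ℂ)*Complex.I/(a:ℂ))) ≠ 0 := by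
    apply neg_ne_zero.mpr
    exact div_ne_zero (mul_ne_zero (mul_ne_zero two_ne_zero hbC) Complex.I_ne_zero) haC
  have hAtend : Tendsto A l (𝓝 (-(2*(b:ℂ)*Complex.I/(a:ℂ)))) := by
    rw [hAdef]
    have h2 : Tendsto (fun ε : ℝ => (ε:ℂ)) (𝓝 0) (𝓝 ((0:ℝ):ℂ)) :=
      Complex.continuous_ofReal.tendsto 0
    have h3 := (h2.mono_left (nhdsWithin_le_nhds (s := Set.Ioi (0:ℝ)))).sub
      (tendsto_const_nhds (x := 2*(b:ℂ)*Complex.I/(a:ℂ)))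
    simpa using h3
  have hA0inv : (-(2*(b:ℂ)*Complex.I/(a:ℂ)))⁻¹ = (((a:ℝ)/(2*(b:ℝ)) : ℝ):ℂ) * Complex.I := by
    refine inv_eq_of_mul_eq_one_right ?_
    push_cast
    field_simp
    ring_nf
    rw [Complex.I_sq]
    ring
  have hAinvtend : Tendsto (fun ε => (A ε)⁻¹) l
      (𝓝 ((((a:ℝ)/(2*(b:ℝ)) : ℝ):ℂ) * Complex.I)) := by
    rw [← hA0inv]
    exact hAtend.inv₀ hA0ne
  have hcpow2 : Tendsto (fun ε : ℝ => ((A ε)⁻¹) ^ (1/2:ℂ)) l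
      (𝓝 (((Real.sqrt ((a:ℝ)/(2*(b:ℝ))) : ℝ):ℂ) * Complex.exp ((Real.pi:ℂ)*Complex.I/4))) := by
    have hslit : (((a:ℝ)/(2*(b:ℝ)) : ℝ):ℂ) * Complex.I ∈ Complex.slitPlane := by
      rw [Complex.mem_slitPlane_iff]
      right
      rw [Complex.im_ofReal_mul, Complex.I_im, mul_one]
      positivity
    have hc := (continuousAt_cpow_const (b := (1/2:ℂ)) hslit).tendsto
    have h3 := hc.comp hAinvtend
    rw [ofReal_mul_cpow_half (by positivity) Complex.I_ne_zero, I_cpow_half] at h3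
    exact h3
  -- combined scalar limit
  have hH : Tendsto (fun ε : ℝ => ((Real.sqrt ε : ℝ):ℂ) * (Z ε) ^ (1/2:ℂ)
        * ((A ε)⁻¹) ^ (1/2:ℂ)) l
      (𝓝 (((((a:ℝ)⁻¹:ℝ)):ℂ) * ((((Real.sqrt ((a:ℝ)/(2*(b:ℝ))) : ℝ):ℂ)
        * Complex.exp ((Real.pi:ℂ)*Complex.I/4))))) := by
    refine Tendsto.congr' ?_ (hcpow1.mul hcpow2)
    filter_upwards [self_mem_nhdsWithin] with ε hε
    have hε' : (0:ℝ) < ε := hε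
    rw [ofReal_mul_cpow_half hε' (hZ0 hε')]
  -- Claim B : limit of F along l
  have hFB : Tendsto (fun ε : ℝ => ((Real.sqrt ε : ℝ):ℂ) * ∑' n : ℤ,
        Complex.exp (-(Real.pi:ℂ) * (A ε) * (n:ℂ)^2)) l
      (𝓝 ((∑ s ∈ Finset.range (2*b).toNat,
        Complex.exp ((Real.pi:ℂ)*Complex.I*(s:ℂ)^2*(-(a:ℂ))/(2*(b:ℂ)))) *
        (((((a:ℝ)⁻¹:ℝ)):ℂ) * ((((Real.sqrt ((a:ℝ)/(2*(b:ℝ))) : ℝ):ℂ)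
        * Complex.exp ((Real.pi:ℂ)*Complex.I/4)))))) := by
    have hlim : Tendsto (fun ε : ℝ => ∑ s ∈ Finset.range (2*b).toNat,
          Complex.exp ((Real.pi:ℂ)*Complex.I*(s:ℂ)^2*(-(a:ℂ))/(2*(b:ℂ))) *
          (((Real.sqrt ε : ℝ):ℂ) * (Z ε) ^ (1/2:ℂ) * ((A ε)⁻¹) ^ (1/2:ℂ)) *
          ∑' k : ℤ, Complex.exp (-(Real.pi:ℂ) * (Z ε) * (k:ℂ)^2
            - 2*(Real.pi:ℂ)*Complex.I*(((s:ℝ)/(2*(b:ℝ)) : ℝ):ℂ)*(k:ℂ))) l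
        (𝓝 (∑ s ∈ Finset.range (2*b).toNat,
          Complex.exp ((Real.pi:ℂ)*Complex.I*(s:ℂ)^2*(-(a:ℂ))/(2*(b:ℂ))) *
          (((((a:ℝ)⁻¹:ℝ)):ℂ) * ((((Real.sqrt ((a:ℝ)/(2*(b:ℝ))) : ℝ):ℂ)
            * Complex.exp ((Real.pi:ℂ)*Complex.I/4)))) * 1)) := by
      refine tendsto_finset_sum _ fun s _ => ?_
      exact ((tendsto_const_nhds.mul hH).mul (tendsto_G ((s:ℝ)/(2*(b:ℝ))) hz2))
    simp only [mul_one] at hlim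
    rw [← Finset.sum_mul] at hlim
    refine Tendsto.congr' ?_ hlim
    filter_upwards [self_mem_nhdsWithin] with ε hε
    exact (repB a b ha hb hε).symm
  -- uniqueness of limits
  have huniq := tendsto_nhds_unique hFA hFB
  -- unfold Phi and conclude
  set SA : ℂ := ∑ r ∈ Finset.range a.toNat,
    Complex.exp ((Real.pi:ℂ)*Complex.I*(r:ℂ)^2*(2*(b:ℂ))/(a:ℂ)) with hSA
  set SB : ℂ := ∑ s ∈ Finset.range (2*b).toNat,
    Complex.exp ((Real.pi:ℂ)*Complex.I*(s:ℂ)^2*(-(a:ℂ))/(2*(b:ℂ))) with hSB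
  have hPhiA : Phi a (2*b) = ((Real.sqrt (a:ℝ) : ℝ):ℂ)⁻¹ * SA := by
    simp only [Phi]; rw [hSA]
    congr 1
    refine Finset.sum_congr rfl fun n _ => ?_
    congr 1
    push_cast
    ring
  have hPhiB : Phi (2*b) (-a) = ((Real.sqrt (2*(b:ℝ)) : ℝ):ℂ)⁻¹ * SB := by
    simp only [Phi]; rw [hSB]
    have h2b : (((2*b : ℤ)):ℝ) = 2*(b:ℝ) := by push_cast; ring
    rw [h2b]
    congr 1
    refine Finset.sum_congr rfl fun n _ => ?_
    congr 1
    push_cast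
    ring
  -- from huniq : SA * a⁻¹ = SB * (a⁻¹ * (√(a/2b) * e))
  have hinv1 : (((a:ℝ)⁻¹ : ℝ):ℂ) * (((a:ℝ) : ℝ):ℂ) = 1 := by
    rw [← Complex.ofReal_mul, inv_mul_cancel₀ haR.ne', Complex.ofReal_one]
  have h8 : SA = SB * ((Real.sqrt ((a:ℝ)/(2*(b:ℝ))) : ℝ):ℂ)
      * Complex.exp ((Real.pi:ℂ)*Complex.I/4) := by
    linear_combination (((a:ℝ) : ℝ):ℂ) * huniq
      - (SA - SB * ((Real.sqrt ((a:ℝ)/(2*(b:ℝ))) : ℝ):ℂ)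
          * Complex.exp ((Real.pi:ℂ)*Complex.I/4)) * hinv1
  have hsqrta : Real.sqrt (a:ℝ) ≠ 0 := (Real.sqrt_pos.mpr haR).ne'
  have hsqrt2b : Real.sqrt (2*(b:ℝ)) ≠ 0 := (Real.sqrt_pos.mpr (by positivity)).ne'
  have h9 : Real.sqrt ((a:ℝ)/(2*(b:ℝ))) = Real.sqrt (a:ℝ) / Real.sqrt (2*(b:ℝ)) :=
    Real.sqrt_div haR.le _
  have hsa : ((Real.sqrt (a:ℝ) : ℝ):ℂ) ≠ 0 := Complex.ofReal_ne_zero.mpr hsqrta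
  rw [hPhiA, hPhiB, h8, h9, Complex.ofReal_div]
  have hca : ((Real.sqrt ((a:ℝ)) : ℝ):ℂ)⁻¹ * ((Real.sqrt ((a:ℝ)):ℝ):ℂ) = 1 :=
    inv_mul_cancel₀ hsa
  linear_combination (SB * (((Real.sqrt (2*(b:ℝ)) : ℝ):ℂ))⁻¹ *
    Complex.exp ((Real.pi:ℂ)*Complex.I/4)) * hca
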